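/- Let k be a perfect field, g ∈ k[x] separable with distinct roots λ₀,…,λ_{n-1} in the algebraic closure, f ∈ k[x,y] a polynomial in two variables, and m a positive integer. Then there exists a unique r ∈ k[x] of degree less than mn such that f(x,y) ≡ r(x+y) modulo the ideal I of k[x,y] generated by g(x) and y^m. -/

import Mathlib

open Polynomial Finset

namespace BivInterp

variable {k : Type*} [Field k]

lemma hasseDeriv_map' {R S : Type*} [CommSemiring R] [CommSemiring S] (φ : R →+* S)
    (i : ℕ) (p : R[X]) : hasseDeriv i (p.map φ) = (hasseDeriv i p).map φ := by
  ext n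
  simp [hasseDeriv_coeff, coeff_map]

lemma factA (g : k[X]) : ∀ m a : ℕ, a < m → g ^ (m - a) ∣ hasseDeriv a (g ^ m) := by
  intro m
  induction m with
  | zero => intro a h; omega
  | succ m ih =>
    intro a ha
    rw [pow_succ', hasseDeriv_mul]
    apply Finset.dvd_sum
    rintro ⟨i, j⟩ hij
    rw [Finset.HasAntidiagonal.mem_antidiagonal] at hij
    rcases Nat.eq_zero_or_pos i with hi | hi
    · subst hi
      have hja : j = a := by omega
      subst hja
      rw [hasseDeriv_zero']
      rcases Nat.lt_or_ge j m with h | h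
      · have h2 : g ^ (m + 1 - j) = g * g ^ (m - j) := by
          rw [← pow_succ']; congr 1; omega
        rw [h2]
        exact mul_dvd_mul_left g (ih j h)
      · have h2 : m + 1 - j = 1 := by omega
        rw [h2, pow_one]
        exact Dvd.intro _ rfl
    · have hj : j < m := by omega
      have h2 : g ^ (m + 1 - a) ∣ g ^ (m - j) := pow_dvd_pow g (by omega)
      exact Dvd.dvd.mul_left (h2.trans (ih j hj)) _

lemma factB (g : k[X]) : ∀ m, g ∣ hasseDeriv m (g ^ m) - derivative g ^ m := by
  intro m
  induction m with
  | zero => simp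
  | succ m ih =>
    rw [pow_succ', hasseDeriv_mul]
    have hmem : ((1 : ℕ), m) ∈ Finset.HasAntidiagonal.antidiagonal (m + 1) := by
      rw [Finset.HasAntidiagonal.mem_antidiagonal]; omega
    set t : ℕ × ℕ → k[X] := fun ij => hasseDeriv ij.1 g * hasseDeriv ij.2 (g ^ m) with ht
    have hsum : (∑ ij ∈ Finset.HasAntidiagonal.antidiagonal (m + 1), t ij) - derivative g ^ (m + 1) =
        ∑ ij ∈ Finset.HasAntidiagonal.antidiagonal (m + 1),
          (t ij - if ij = ((1 : ℕ), m) then derivative g ^ (m + 1) else 0) := by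
      rw [Finset.sum_sub_distrib, Finset.sum_ite_eq' (Finset.HasAntidiagonal.antidiagonal (m + 1)), if_pos hmem]
    rw [hsum]
    apply Finset.dvd_sum
    rintro ⟨i, j⟩ hij
    rw [Finset.HasAntidiagonal.mem_antidiagonal] at hij
    have hij' : i + j = m + 1 := hij
    by_cases hcase : ((i, j) : ℕ × ℕ) = (1, m)
    · rw [if_pos hcase, hcase]
      have heq : t (1, m) - derivative g ^ (m + 1) =
          derivative g * (hasseDeriv m (g ^ m) - derivative g ^ m) := by
        simp only [ht, hasseDeriv_one']
        ring
      rw [heq]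
      exact ih.mul_left _
    · rw [if_neg hcase, sub_zero]
      rcases Nat.lt_or_ge i 2 with hi2 | hi2
      · rcases Nat.eq_zero_or_pos i with hi0 | hi0
        · subst hi0
          simp only [ht, hasseDeriv_zero']
          exact dvd_mul_right g _
        · exfalso
          have hi1 : i = 1 := by omega
          subst hi1
          exact hcase (by simp only [Prod.mk.injEq]; exact ⟨trivial, by omega⟩)
      · have hj : j < m := by omega
        have hd := (pow_dvd_pow g (by omega : 1 ≤ m - j)).trans (factA g m j hj)
        rw [pow_one] at hd
        exact hd.mul_left _

lemma dvd_hasse_mul (g q : k[X]) {i m : ℕ} (him : i < m) : g ∣ hasseDeriv i (g ^ m * q) := by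
  rw [hasseDeriv_mul]
  apply Finset.dvd_sum
  rintro ⟨a, b⟩ hab
  rw [Finset.HasAntidiagonal.mem_antidiagonal] at hab
  have ha : a < m := by omega
  have := (pow_dvd_pow g (by omega : 1 ≤ m - a)).trans (factA g m a ha)
  rw [pow_one] at this
  exact this.mul_right _

lemma hasse_mul_top (g q : k[X]) (m : ℕ) :
    g ∣ hasseDeriv m (g ^ m * q) - derivative g ^ m * q := by
  rw [hasseDeriv_mul]
  have hmem : ((m : ℕ), 0) ∈ Finset.HasAntidiagonal.antidiagonal m := by
    rw [Finset.HasAntidiagonal.mem_antidiagonal]; omega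
  set t : ℕ × ℕ → k[X] := fun ab => hasseDeriv ab.1 (g ^ m) * hasseDeriv ab.2 q with ht
  have hsum : (∑ ab ∈ Finset.HasAntidiagonal.antidiagonal m, t ab) - derivative g ^ m * q =
      ∑ ab ∈ Finset.HasAntidiagonal.antidiagonal m,
        (t ab - if ab = ((m : ℕ), 0) then derivative g ^ m * q else 0) := by
    rw [Finset.sum_sub_distrib, Finset.sum_ite_eq' (Finset.HasAntidiagonal.antidiagonal m), if_pos hmem]
  rw [hsum]
  apply Finset.dvd_sum
  rintro ⟨a, b⟩ hab
  rw [Finset.HasAntidiagonal.mem_antidiagonal] at hab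
  have hab' : a + b = m := hab
  by_cases hcase : ((a, b) : ℕ × ℕ) = (m, 0)
  · rw [if_pos hcase, hcase]
    have heq : t (m, 0) - derivative g ^ m * q =
        (hasseDeriv m (g ^ m) - derivative g ^ m) * q := by
      simp only [ht, hasseDeriv_zero']
      ring
    rw [heq]
    exact (factB g m).mul_right _
  · rw [if_neg hcase, sub_zero]
    have ha : a < m := by
      rcases Nat.lt_or_ge a m with h | h
      · exact h
      · exfalso; exact hcase (by simp only [Prod.mk.injEq]; omega)
    have hd := (pow_dvd_pow g (by omega : 1 ≤ m - a)).trans (factA g m a ha)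
    rw [pow_one] at hd
    exact hd.mul_right _

lemma lemH {g : k[X]} (hg : g.Separable) :
    ∀ m (d : k[X]), (∀ i < m, g ∣ hasseDeriv i d) → g ^ m ∣ d := by
  intro m
  induction m with
  | zero => intro d _; simpa using one_dvd d
  | succ m ih =>
    intro d hd
    obtain ⟨t, rfl⟩ := ih d fun i hi => hd i (by omega)
    have h1 : g ∣ hasseDeriv m (g ^ m * t) := hd m (by omega)
    have h2 := hasse_mul_top g t m
    have h3 : g ∣ derivative g ^ m * t := by
      have h4 := dvd_sub h1 h2
      simp only [sub_sub_cancel] at h4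
      exact h4
    have hc : IsCoprime g (derivative g ^ m) := hg.pow_right
    have ht : g ∣ t := hc.dvd_of_dvd_mul_left h3
    rw [pow_succ]
    exact mul_dvd_mul_left (g ^ m) ht

lemma exR {g : k[X]} (hg : g.Separable) (f : ℕ → k[X]) :
    ∀ m, ∃ r, ∀ i < m, g ∣ f i - hasseDeriv i r := by
  intro m
  induction m with
  | zero => exact ⟨0, fun i hi => absurd hi (by omega)⟩
  | succ m ih =>
    obtain ⟨r, hr⟩ := ih
    have hc : IsCoprime g (derivative g ^ m) := hg.pow_right
    obtain ⟨u, v, huv⟩ := hc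
    set q : k[X] := v * (f m - hasseDeriv m r) with hq
    refine ⟨r + g ^ m * q, fun i hi => ?_⟩
    rw [map_add]
    rcases Nat.lt_or_ge i m with him | him
    · have e : f i - (hasseDeriv i r + hasseDeriv i (g ^ m * q)) =
          (f i - hasseDeriv i r) - hasseDeriv i (g ^ m * q) := by ring
      rw [e]
      exact dvd_sub (hr i him) (dvd_hasse_mul g q him)
    · have hieq : i = m := by omega
      subst hieq
      have h2 := hasse_mul_top g q i
      have h3 : (f i - hasseDeriv i r) - derivative g ^ i * q =
          g * (u * (f i - hasseDeriv i r)) := by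
        rw [hq]
        linear_combination (hasseDeriv i r - f i) * huv
      have e : f i - (hasseDeriv i r + hasseDeriv i (g ^ i * q)) =
          ((f i - hasseDeriv i r) - derivative g ^ i * q)
            - (hasseDeriv i (g ^ i * q) - derivative g ^ i * q) := by ring
      rw [e, h3]
      exact dvd_sub (Dvd.intro _ rfl) h2

theorem main1 (g : k[X]) (hg : g.Separable) (f : ℕ → k[X]) (m : ℕ) :
    ∃! r : k[X], r.degree < ((m * g.natDegree : ℕ) : WithBot ℕ) ∧
      ∀ i < m, g ∣ f i - hasseDeriv i r := by
  have hg0 : g ≠ 0 := hg.ne_zero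
  have hlc : g.leadingCoeff⁻¹ ≠ 0 := inv_ne_zero (leadingCoeff_ne_zero.mpr hg0)
  obtain ⟨r0, hr0⟩ := exR hg f m
  set G0 : k[X] := g * C g.leadingCoeff⁻¹ with hG0
  have hmono : G0.Monic := monic_mul_leadingCoeff_inv hg0
  have hndeg : (G0 ^ m).natDegree = m * g.natDegree := by
    rw [natDegree_pow, hG0, natDegree_mul hg0 (by simpa using hlc), natDegree_C, add_zero]
  have hdegpow : (G0 ^ m).degree = ((m * g.natDegree : ℕ) : WithBot ℕ) := by
    rw [degree_eq_natDegree (hmono.pow m).ne_zero, hndeg]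
  have hgpow : degree (g ^ m) = ((m * g.natDegree : ℕ) : WithBot ℕ) := by
    rw [degree_eq_natDegree (pow_ne_zero m hg0), natDegree_pow]
  set r : k[X] := r0 %ₘ G0 ^ m with hr
  have hdeg : r.degree < ((m * g.natDegree : ℕ) : WithBot ℕ) := by
    rw [← hdegpow]
    exact degree_modByMonic_lt r0 (hmono.pow m)
  have hsub : r0 - r = g ^ m * (C (g.leadingCoeff⁻¹) ^ m * (r0 /ₘ G0 ^ m)) := by
    have h := modByMonic_add_div r0 (G0 ^ m)
    have hG : G0 ^ m = g ^ m * C g.leadingCoeff⁻¹ ^ m := by rw [hG0, mul_pow]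
    rw [hr, ← mul_assoc, ← hG]
    linear_combination -h
  have hcond : ∀ i < m, g ∣ f i - hasseDeriv i r := by
    intro i hi
    have h1 : f i - hasseDeriv i r = (f i - hasseDeriv i r0) + hasseDeriv i (r0 - r) := by
      rw [map_sub]
      ring
    rw [h1, hsub]
    exact dvd_add (hr0 i hi) (dvd_hasse_mul g _ hi)
  refine ⟨r, ⟨hdeg, hcond⟩, ?_⟩
  rintro y ⟨hydeg, hycond⟩
  have hdvd : g ^ m ∣ y - r := by
    apply lemH hg
    intro i hi
    have h1 : hasseDeriv i (y - r) = (f i - hasseDeriv i r) - (f i - hasseDeriv i y) := by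
      rw [map_sub]
      ring
    rw [h1]
    exact dvd_sub (hcond i hi) (hycond i hi)
  have hlt : (y - r).degree < (g ^ m).degree := by
    rw [hgpow]
    exact lt_of_le_of_lt (degree_sub_le y r) (max_lt hydeg hdeg)
  have h0 : y - r = 0 := eq_zero_of_dvd_of_degree_lt hdvd hlt
  exact sub_eq_zero.mp h0

lemma coeff_T (r : k[X]) (i : ℕ) :
    (Polynomial.aeval (Polynomial.X + Polynomial.C Polynomial.X :
      Polynomial (Polynomial k)) r).coeff i = hasseDeriv i r := by
  have h1 : (Polynomial.aeval (Polynomial.X + Polynomial.C Polynomial.X :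
      Polynomial (Polynomial k)) r) = Polynomial.taylor Polynomial.X (r.map Polynomial.C) := by
    rw [Polynomial.aeval_def, IsScalarTower.algebraMap_eq k (Polynomial k)
      (Polynomial (Polynomial k)), Polynomial.algebraMap_eq, Polynomial.algebraMap_eq,
      ← Polynomial.eval₂_map, Polynomial.taylor_apply, Polynomial.comp]
  rw [h1, Polynomial.taylor_coeff, hasseDeriv_map', Polynomial.eval_map, Polynomial.eval₂_C_X]

lemma span_iff (g : k[X]) (m : ℕ) (W : Polynomial (Polynomial k)) :
    W ∈ Ideal.span ({Polynomial.C g, (Polynomial.X : Polynomial (Polynomial k)) ^ m} :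
      Set (Polynomial (Polynomial k))) ↔ ∀ i < m, g ∣ W.coeff i := by
  rw [Ideal.mem_span_pair]
  constructor
  · rintro ⟨a, b, rfl⟩ i hi
    rw [Polynomial.coeff_add, Polynomial.coeff_mul_C, Polynomial.coeff_mul_X_pow',
      if_neg (by omega), add_zero]
    exact Dvd.intro_left _ rfl
  · intro h
    have hch : ∀ i, ∃ c : k[X], i < m → W.coeff i = g * c := by
      intro i
      by_cases hi : i < m
      · obtain ⟨c, hc⟩ := h i hi
        exact ⟨c, fun _ => hc⟩
      · exact ⟨0, fun h' => absurd h' hi⟩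
    choose c hc using hch
    set A : Polynomial (Polynomial k) :=
      ∑ i ∈ Finset.range m, Polynomial.C (c i) * Polynomial.X ^ i with hA
    have hAco : ∀ d, d < m → A.coeff d = c d := by
      intro d hd
      rw [hA, Polynomial.finset_sum_coeff]
      simp only [Polynomial.coeff_C_mul, Polynomial.coeff_X_pow, mul_ite, mul_one, mul_zero]
      rw [Finset.sum_ite_eq (Finset.range m), if_pos (Finset.mem_range.mpr hd)]
    have hdvd : (Polynomial.X : Polynomial (Polynomial k)) ^ m ∣ W - A * Polynomial.C g := by
      rw [Polynomial.X_pow_dvd_iff]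
      intro d hd
      rw [Polynomial.coeff_sub, Polynomial.coeff_mul_C, hAco d hd, hc d hd]
      ring
    obtain ⟨B, hB⟩ := hdvd
    exact ⟨A, B, by linear_combination -hB⟩

theorem main_bivariate
    {k : Type*} [Field k]
    (g : Polynomial k) (hg : g.Separable)
    (f : MvPolynomial (Fin 2) k) (m : ℕ) :
    ∃! r : Polynomial k,
      r.degree < ((m * g.natDegree : ℕ) : WithBot ℕ) ∧
      f - Polynomial.aeval (MvPolynomial.X 0 + MvPolynomial.X 1) r ∈
        Ideal.span ({Polynomial.aeval (MvPolynomial.X 0) g,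
          (MvPolynomial.X 1 : MvPolynomial (Fin 2) k) ^ m} : Set (MvPolynomial (Fin 2) k)) := by
  classical
  set Φ : MvPolynomial (Fin 2) k →ₐ[k] Polynomial (Polynomial k) :=
    MvPolynomial.aeval ![Polynomial.C Polynomial.X, Polynomial.X] with hPhidef
  set Ψ : Polynomial (Polynomial k) →ₐ[k] MvPolynomial (Fin 2) k :=
    Polynomial.aevalTower (Polynomial.aeval (MvPolynomial.X 0)) (MvPolynomial.X 1) with hPsidef
  have hPsiPhi : ∀ p, Ψ (Φ p) = p := by
    intro p
    have h : Ψ.comp Φ = AlgHom.id k (MvPolynomial (Fin 2) k) := by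
      apply MvPolynomial.algHom_ext
      intro i
      fin_cases i <;>
        simp [hPhidef, hPsidef]
    calc Ψ (Φ p) = (Ψ.comp Φ) p := rfl
      _ = p := by rw [h]; rfl
  have hPhis : Φ (MvPolynomial.X 0 + MvPolynomial.X 1) =
      Polynomial.X + Polynomial.C Polynomial.X := by
    rw [map_add]
    simp only [hPhidef, MvPolynomial.aeval_X, Matrix.cons_val_zero, Matrix.cons_val_one,
      Matrix.head_cons]
    ring
  have hPhiG : Φ (Polynomial.aeval (MvPolynomial.X 0) g) = Polynomial.C g := by
    rw [← Polynomial.aeval_algHom_apply]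
    have h2 : Φ (MvPolynomial.X 0) = Polynomial.C Polynomial.X := by
      simp [hPhidef]
    rw [h2]
    have h3 := Polynomial.aeval_algHom_apply
      (Polynomial.CAlgHom (R := k) (A := Polynomial k)) Polynomial.X g
    simpa using h3
  have hPsiC : ∀ p : Polynomial k, Ψ (Polynomial.C p) = Polynomial.aeval (MvPolynomial.X 0) p :=
    fun p => Polynomial.aevalTower_C _ _ _
  have hPsiX : Ψ Polynomial.X = MvPolynomial.X 1 := Polynomial.aevalTower_X _ _
  have hPhir : ∀ r : Polynomial k,
      Φ (Polynomial.aeval (MvPolynomial.X 0 + MvPolynomial.X 1) r) =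
        Polynomial.aeval (Polynomial.X + Polynomial.C Polynomial.X :
          Polynomial (Polynomial k)) r := by
    intro r
    rw [← Polynomial.aeval_algHom_apply, hPhis]
  have hPsir : ∀ r : Polynomial k,
      Ψ (Polynomial.aeval (Polynomial.X + Polynomial.C Polynomial.X :
        Polynomial (Polynomial k)) r) =
        Polynomial.aeval (MvPolynomial.X 0 + MvPolynomial.X 1) r := by
    intro r
    rw [← Polynomial.aeval_algHom_apply, map_add, hPsiX]
    rw [hPsiC]
    simp only [Polynomial.aeval_X]
    rw [add_comm]
  have key : ∀ r : Polynomial k,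
      (f - Polynomial.aeval (MvPolynomial.X 0 + MvPolynomial.X 1) r ∈
        Ideal.span ({Polynomial.aeval (MvPolynomial.X 0) g,
          (MvPolynomial.X 1 : MvPolynomial (Fin 2) k) ^ m} :
            Set (MvPolynomial (Fin 2) k))) ↔
      (∀ i < m, g ∣ (Φ f).coeff i - hasseDeriv i r) := by
    intro r
    constructor
    · intro hmem
      rw [Ideal.mem_span_pair] at hmem
      obtain ⟨a, b, hab⟩ := hmem
      have hW : Φ a * Polynomial.C g + Φ b * Polynomial.X ^ m =
          Φ f - Polynomial.aeval (Polynomial.X + Polynomial.C Polynomial.X :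
            Polynomial (Polynomial k)) r := by
        have h := congrArg Φ hab
        simp only [map_add, map_mul, map_sub, map_pow] at h
        rw [hPhiG, hPhir] at h
        have hX1 : Φ (MvPolynomial.X 1) = Polynomial.X := by
          simp [hPhidef]
        rw [hX1] at h
        exact h
      intro i hi
      have h2 := (span_iff g m _).mp (Ideal.mem_span_pair.mpr ⟨Φ a, Φ b, hW⟩) i hi
      rwa [Polynomial.coeff_sub, coeff_T] at h2
    · intro h
      have hW : Φ f - Polynomial.aeval (Polynomial.X + Polynomial.C Polynomial.X :
          Polynomial (Polynomial k)) r ∈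
          Ideal.span ({Polynomial.C g, (Polynomial.X : Polynomial (Polynomial k)) ^ m} :
            Set (Polynomial (Polynomial k))) := by
        rw [span_iff]
        intro i hi
        rw [Polynomial.coeff_sub, coeff_T]
        exact h i hi
      rw [Ideal.mem_span_pair] at hW
      obtain ⟨a, b, hab⟩ := hW
      rw [Ideal.mem_span_pair]
      refine ⟨Ψ a, Ψ b, ?_⟩
      have h := congrArg Ψ hab
      simp only [map_add, map_mul, map_sub, map_pow] at h
      rw [hPsiC, hPsiX, hPsiPhi, hPsir] at h
      exact h
  obtain ⟨r, ⟨h1, h2⟩, hu⟩ := main1 g hg (fun i => (Φ f).coeff i) m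
  exact ⟨r, ⟨h1, (key r).mpr h2⟩, fun y hy => hu y ⟨hy.1, (key y).mp hy.2⟩⟩

end BivInterp

theorem bivariate_congruence_interpolant
    {k : Type*} [Field k] [PerfectField k]
    (g : Polynomial k) (hg : g.Separable)
    (f : MvPolynomial (Fin 2) k) (m : ℕ) (hm : 0 < m) :
    ∃! r : Polynomial k,
      r.degree < ((m * g.natDegree : ℕ) : WithBot ℕ) ∧
      f - Polynomial.aeval (MvPolynomial.X 0 + MvPolynomial.X 1) r ∈
        Ideal.span ({Polynomial.aeval (MvPolynomial.X 0) g,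
          (MvPolynomial.X 1 : MvPolynomial (Fin 2) k) ^ m} : Set (MvPolynomial (Fin 2) k)) :=
  BivInterp.main_bivariate g hg f m
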